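/- Let p ≥ 1 and let G be an ordered graph with chromatic number at least k ≥ 2. Consider the conflict relation where edges (u1,v1), (u2,v2) are conflicting if |(u1+v1) - (u2+v2)| ≥ p (their midpoints are at distance at least p/2). Then G contains ⌈(2k-3)/p⌉ pairwise conflicting edges. Moreover, for the complete graph on vertex set {1,...,k} the maximum number of pairwise conflicting edges is exactly ⌈(2k-3)/p⌉. -/

import Mathlib

open Finset
open scoped Classical

-- greedy selection of p-separated subset
private lemma greedy_sep (p : ℕ) (hp : 1 ≤ p) :
    ∀ n : ℕ, ∀ T : Finset ℤ, T.card = n →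
    ∃ U : Finset ℤ, U ⊆ T ∧ (n + p - 1) / p ≤ U.card ∧
      ∀ a ∈ U, ∀ b ∈ U, a ≠ b → (p : ℤ) ≤ |a - b| := by
  intro n
  induction n using Nat.strong_induction_on with
  | _ n ih =>
    intro T hT
    rcases Nat.eq_zero_or_pos n with h0 | h1
    · have hz : (n + p - 1) / p = 0 := by
        rw [h0]; exact Nat.div_eq_of_lt (by omega)
      exact ⟨∅, empty_subset _, by simp [hz], by simp⟩
    · have hTne : T.Nonempty := by rw [← card_pos, hT]; omega
      set m := T.min' hTne with hm
      classical
      set T' := T.filter (fun x => m + p ≤ x) with hT'def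
      have hsub : T' ⊆ T := filter_subset _ _
      have hmT : m ∈ T := T.min'_mem hTne
      have hmem' : ∀ x ∈ T', m + p ≤ x := by
        intro x hx; exact (mem_filter.mp hx).2
      have hmnot : m ∉ T' := by
        intro h; have := hmem' m h; omega
      have hdiff : T \ T' ⊆ Finset.Icc m (m + p - 1) := by
        intro x hx
        rw [mem_sdiff] at hx
        have h1 : m ≤ x := T.min'_le x hx.1
        have h2 : ¬ (m + p ≤ x) := by
          intro h; exact hx.2 (mem_filter.mpr ⟨hx.1, h⟩)
        rw [Finset.mem_Icc]; omega
      have hcard_diff : (T \ T').card ≤ p := by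
        calc (T \ T').card ≤ (Finset.Icc m (m + (p:ℤ) - 1)).card := card_le_card hdiff
        _ = p := by rw [Int.card_Icc]; omega
      have hle : T'.card ≤ T.card := card_le_card hsub
      have hcardT : T.card = T'.card + (T \ T').card := by
        rw [card_sdiff_of_subset hsub]; omega
      have hcard_lt : T'.card < n := by
        have : m ∈ T \ T' := mem_sdiff.mpr ⟨hmT, hmnot⟩
        have : 1 ≤ (T \ T').card := card_pos.mpr ⟨m, this⟩
        omega
      obtain ⟨U', hU'sub, hU'card, hU'sep⟩ := ih T'.card hcard_lt T' rfl
      have hmU' : m ∉ U' := fun h => hmnot (hU'sub h)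
      refine ⟨insert m U', ?_, ?_, ?_⟩
      · intro x hx
        rcases mem_insert.mp hx with h | h
        · exact h ▸ hmT
        · exact hsub (hU'sub h)
      · rw [card_insert_of_notMem hmU']
        have h2 : (T'.card + p - 1) / p + 1 = (T'.card + p - 1 + p) / p := by
          rw [Nat.add_div_right _ (by omega : 0 < p)]
        have h3 : (n + p - 1) / p ≤ (T'.card + p - 1 + p) / p := by
          apply Nat.div_le_div_right; omega
        omega
      · intro a ha b hb hne
        rcases mem_insert.mp ha with ha' | ha' <;> rcases mem_insert.mp hb with hb' | hb'
        · exact absurd (ha'.trans hb'.symm) hne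
        · subst ha'; have := hmem' b (hU'sub hb')
          rw [abs_sub_comm]; rw [abs_of_nonneg (by omega)]; omega
        · subst hb'; have := hmem' a (hU'sub ha')
          rw [abs_of_nonneg (by omega)]; omega
        · exact hU'sep a ha' b hb' hne

-- p-separated sets spread out
private lemma sep_spread (p : ℕ) :
    ∀ n : ℕ, ∀ U : Finset ℤ, U.card = n → ∀ hne : U.Nonempty,
    (∀ a ∈ U, ∀ b ∈ U, a ≠ b → (p : ℤ) ≤ |a - b|) →
    U.min' hne + (p : ℤ) * ((n : ℤ) - 1) ≤ U.max' hne := by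
  intro n
  induction n using Nat.strong_induction_on with
  | _ n ih =>
    intro U hU hne hsep
    rcases Nat.lt_or_ge n 2 with h2 | h2
    · have : (p:ℤ) * ((n:ℤ) - 1) ≤ 0 := by
        have hn1 : 1 ≤ n := by rw [← hU]; exact card_pos.mpr hne
        have : (n:ℤ) = 1 := by omega
        rw [this]; simp
      have := U.min'_le (U.max' hne) (U.max'_mem hne)
      omega
    · classical
      set m := U.min' hne with hm
      have hmU : m ∈ U := U.min'_mem hne
      set U' := U.erase m with hU'def
      have hU'card : U'.card = n - 1 := by rw [hU'def, card_erase_of_mem hmU, hU]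
      have hU'ne : U'.Nonempty := by rw [← card_pos, hU'card]; omega
      have hU'sub : U' ⊆ U := erase_subset _ _
      have hsep' : ∀ a ∈ U', ∀ b ∈ U', a ≠ b → (p : ℤ) ≤ |a - b| :=
        fun a ha b hb => hsep a (hU'sub ha) b (hU'sub hb)
      have hIH := ih (n-1) (by omega) U' hU'card hU'ne hsep'
      have hmin' : m + p ≤ U'.min' hU'ne := by
        have h1 : U'.min' hU'ne ∈ U' := U'.min'_mem hU'ne
        have h2 : U'.min' hU'ne ≠ m := (mem_erase.mp h1).1
        have h3 : m ≤ U'.min' hU'ne := U.min'_le _ (hU'sub h1)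
        have h4 := hsep _ (hU'sub h1) m hmU h2
        rw [abs_of_nonneg (by omega)] at h4; omega
      have hmax' : U'.max' hU'ne ≤ U.max' hne := max'_subset hU'ne hU'sub
      have hcast : ((n - 1 : ℕ) : ℤ) = (n : ℤ) - 1 := by omega
      rw [hcast] at hIH
      nlinarith [hIH, hmin', hmax']

-- existence of a "core" with min degree ≥ k
private lemma exists_core (k : ℕ) (hk : 1 ≤ k) :
    ∀ n : ℕ, ∀ A : Finset ℤ, A.card = n → ∀ G : SimpleGraph ℤ,
    (∀ x y : ℤ, G.Adj x y → x ∈ A) → ¬ G.Colorable k →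
    ∃ B : Finset ℤ, B.Nonempty ∧
      ∀ a ∈ B, ∃ C : Finset ℤ, C ⊆ B ∧ C.card = k ∧ ∀ c ∈ C, G.Adj a c := by
  intro n
  induction n using Nat.strong_induction_on with
  | _ n ih =>
    intro A hA G hend hncol
    by_cases hall : ∀ a ∈ A, k ≤ (A.filter (fun x => G.Adj a x)).card
    · have hAne : A.Nonempty := by
        rcases A.eq_empty_or_nonempty with h | h
        · exfalso
          apply hncol
          exact ⟨SimpleGraph.Coloring.mk (fun _ => ⟨0, hk⟩)
            (fun {v w} hadj => absurd (hend v w hadj) (by simp [h]))⟩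
        · exact h
      refine ⟨A, hAne, ?_⟩
      intro a ha
      obtain ⟨C, hC1, hC2⟩ := Finset.exists_subset_card_eq (hall a ha)
      exact ⟨C, fun x hx => (mem_filter.mp (hC1 hx)).1, hC2,
        fun c hc => (mem_filter.mp (hC1 hc)).2⟩
    · push_neg at hall
      obtain ⟨a, haA, hdeg⟩ := hall
      set G' : SimpleGraph ℤ :=
        { Adj := fun x y => G.Adj x y ∧ x ≠ a ∧ y ≠ a
          symm := ⟨by intro x y ⟨h1, h2, h3⟩; exact ⟨h1.symm, h3, h2⟩⟩
          loopless := ⟨by intro x ⟨h1, _, _⟩; exact G.irrefl h1⟩ } with hG'def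
      have hend' : ∀ x y : ℤ, G'.Adj x y → x ∈ A.erase a := by
        intro x y ⟨h1, h2, _⟩; exact mem_erase.mpr ⟨h2, hend x y h1⟩
      have hncol' : ¬ G'.Colorable k := by
        intro ⟨C⟩
        apply hncol
        set N := A.filter (fun x => G.Adj a x) with hN
        have hNcard : N.card < k := hdeg
        have hcolors : ¬ ((Finset.univ : Finset (Fin k)) ⊆ N.image C) := by
          intro hsubs
          have h1 : (N.image C).card ≤ N.card := card_image_le
          have h2 : k ≤ (N.image C).card := by simpa using card_le_card hsubs
          omega
        obtain ⟨c, _, hc⟩ := Finset.not_subset.mp hcolors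
        refine ⟨SimpleGraph.Coloring.mk (fun x => if x = a then c else C x) ?_⟩
        intro v w hadj heq0
        have heq : (if v = a then c else C v) = (if w = a then c else C w) := heq0
        by_cases hv : v = a <;> by_cases hw : w = a
        · rw [hv, hw] at hadj; exact G.irrefl hadj
        · have hwN : w ∈ N := mem_filter.mpr ⟨hend w v hadj.symm, hv ▸ hadj⟩
          rw [if_pos hv, if_neg hw] at heq
          exact hc (by rw [heq]; exact mem_image_of_mem C hwN)
        · have hvN : v ∈ N := mem_filter.mpr ⟨hend v w hadj, hw ▸ hadj.symm⟩
          rw [if_neg hv, if_pos hw] at heq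
          exact hc (by rw [← heq]; exact mem_image_of_mem C hvN)
        · rw [if_neg hv, if_neg hw] at heq
          exact C.valid (show G'.Adj v w from ⟨hadj, hv, hw⟩) heq
      have hlt : (A.erase a).card < n := by
        have hpos : 1 ≤ A.card := card_pos.mpr ⟨a, haA⟩
        rw [card_erase_of_mem haA]; omega
      obtain ⟨B, hBne, hB⟩ := ih (A.erase a).card hlt (A.erase a) rfl G' hend' hncol'
      refine ⟨B, hBne, ?_⟩
      intro b hb
      obtain ⟨C, hC1, hC2, hC3⟩ := hB b hb
      exact ⟨C, hC1, hC2, fun c hc => (hC3 c hc).1⟩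

private lemma support_finite {G : SimpleGraph ℤ} (h : G.edgeSet.Finite) : G.support.Finite := by
  have hsub : G.support ⊆ ⋃ e ∈ G.edgeSet, {x | x ∈ e} := by
    intro v hv
    obtain ⟨w, hw⟩ := hv
    exact Set.mem_biUnion (G.mem_edgeSet.mpr hw) (Sym2.mem_mk_left v w)
  refine Set.Finite.subset (h.biUnion (fun e _ => ?_)) hsub
  induction e using Sym2.ind with
  | _ a b =>
    have : {x | x ∈ s(a,b)} = ({a, b} : Set ℤ) := by
      ext x; simp [Sym2.mem_iff]
    rw [this]
    exact (Set.finite_singleton b).insert a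

theorem stmt15 (p k : ℕ) (hp : 1 ≤ p) (hk : 2 ≤ k) :
    (∀ G : SimpleGraph ℤ, G.edgeSet.Finite → (k : ℕ∞) ≤ G.chromaticNumber →
      ∃ S : Finset (ℤ × ℤ), S.card = (2 * k + p - 4) / p ∧
        (∀ e ∈ S, e.1 < e.2 ∧ G.Adj e.1 e.2) ∧
        ∀ e1 ∈ S, ∀ e2 ∈ S, e1 ≠ e2 →
          (p : ℤ) ≤ |(e1.1 + e1.2) - (e2.1 + e2.2)|) ∧
    (∀ S : Finset (ℤ × ℤ),
      (∀ e ∈ S, 1 ≤ e.1 ∧ e.1 < e.2 ∧ e.2 ≤ (k : ℤ)) →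
      (∀ e1 ∈ S, ∀ e2 ∈ S, e1 ≠ e2 →
        (p : ℤ) ≤ |(e1.1 + e1.2) - (e2.1 + e2.2)|) →
      S.card ≤ (2 * k + p - 4) / p) := by
  constructor
  · -- lower bound part
    intro G hfin hχ
    have hncol : ¬ G.Colorable (k - 1) := by
      intro h
      have h2 := h.chromaticNumber_le
      have h3 : (k : ℕ∞) ≤ ((k - 1 : ℕ) : ℕ∞) := le_trans hχ h2
      rw [Nat.cast_le] at h3
      omega
    have hsupp := support_finite hfin
    have hend : ∀ x y : ℤ, G.Adj x y → x ∈ hsupp.toFinset :=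
      fun x y h => hsupp.mem_toFinset.mpr ⟨y, h⟩
    obtain ⟨B, hBne, hB⟩ :=
      exists_core (k - 1) (by omega) hsupp.toFinset.card hsupp.toFinset rfl G hend hncol
    set v := B.min' hBne with hv
    set w := B.max' hBne with hw
    obtain ⟨Cv, hCv1, hCv2, hCv3⟩ := hB v (B.min'_mem hBne)
    obtain ⟨Cw, hCw1, hCw2, hCw3⟩ := hB w (B.max'_mem hBne)
    classical
    set X := Cv.image (fun x => v + x) with hX
    set Y := Cw.image (fun y => y + w) with hY
    have hXcard : X.card = k - 1 := by
      rw [hX, card_image_of_injective _ (add_right_injective v), hCv2]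
    have hYcard : Y.card = k - 1 := by
      rw [hY, card_image_of_injective _ (add_left_injective w), hCw2]
    have hXY : (X ∩ Y : Finset ℤ) ⊆ {v + w} := by
      intro s hs
      have hsX := (mem_inter.mp hs).1
      have hsY := (mem_inter.mp hs).2
      obtain ⟨x, hx, hxe⟩ := mem_image.mp hsX
      obtain ⟨y, hy, hye⟩ := mem_image.mp hsY
      have hxw : x ≤ w := B.le_max' x (hCv1 hx)
      have hyv : v ≤ y := B.min'_le y (hCw1 hy)
      rw [mem_singleton]
      omega
    have hedges : ∀ s ∈ X ∪ Y,
        ∃ e : ℤ × ℤ, e.1 < e.2 ∧ G.Adj e.1 e.2 ∧ e.1 + e.2 = s := by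
      intro s hs
      rcases mem_union.mp hs with h | h
      · obtain ⟨x, hx, hxe⟩ := mem_image.mp h
        have hadj : G.Adj v x := hCv3 x hx
        have hvx : v < x := lt_of_le_of_ne (B.min'_le x (hCv1 hx)) hadj.ne
        exact ⟨(v, x), hvx, hadj, hxe⟩
      · obtain ⟨y, hy, hye⟩ := mem_image.mp h
        have hadj : G.Adj w y := hCw3 y hy
        have hyw : y < w := lt_of_le_of_ne (B.le_max' y (hCw1 hy)) hadj.ne'
        exact ⟨(y, w), hyw, hadj.symm, hye⟩
    have hcardXY : 2 * k - 3 ≤ (X ∪ Y).card := by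
      have h1 := card_union_add_card_inter X Y
      have h2 : (X ∩ Y).card ≤ 1 :=
        le_trans (card_le_card hXY) (by simp)
      omega
    obtain ⟨U, hU1, hU2, hU3⟩ := greedy_sep p hp (X ∪ Y).card (X ∪ Y) rfl
    have hm : (2 * k + p - 4) / p ≤ U.card := by
      refine le_trans ?_ hU2
      apply Nat.div_le_div_right
      omega
    obtain ⟨U', hU'1, hU'2⟩ := Finset.exists_subset_card_eq hm
    set f : ℤ → ℤ × ℤ := fun s =>
      if h : ∃ e : ℤ × ℤ, e.1 < e.2 ∧ G.Adj e.1 e.2 ∧ e.1 + e.2 = s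
      then h.choose else (0, 0) with hf_def
    have hf : ∀ s ∈ U', (f s).1 < (f s).2 ∧ G.Adj (f s).1 (f s).2 ∧ (f s).1 + (f s).2 = s := by
      intro s hs
      have hex := hedges s (hU1 (hU'1 hs))
      rw [hf_def]
      simp only [dif_pos hex]
      exact hex.choose_spec
    refine ⟨U'.image f, ?_, ?_, ?_⟩
    · rw [card_image_of_injOn, hU'2]
      intro s1 h1 s2 h2 hfe
      have e1 := (hf s1 h1).2.2
      have e2 := (hf s2 h2).2.2
      rw [← e1, ← e2, hfe]
    · intro e he
      obtain ⟨s, hs, rfl⟩ := mem_image.mp he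
      exact ⟨(hf s hs).1, (hf s hs).2.1⟩
    · intro e1 he1 e2 he2 hne
      obtain ⟨s1, hs1, rfl⟩ := mem_image.mp he1
      obtain ⟨s2, hs2, rfl⟩ := mem_image.mp he2
      have hsne : s1 ≠ s2 := fun h => hne (by rw [h])
      have hsep := hU3 s1 (hU'1 hs1) s2 (hU'1 hs2) hsne
      rw [(hf s1 hs1).2.2, (hf s2 hs2).2.2]
      exact hsep
  · -- upper bound part
    intro S hSbound hSsep
    classical
    set Sig := S.image (fun e : ℤ × ℤ => e.1 + e.2) with hSig
    have hinj : Set.InjOn (fun e : ℤ × ℤ => e.1 + e.2) S := by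
      intro e1 h1 e2 h2 heq
      by_contra hne
      have h3 := hSsep e1 h1 e2 h2 hne
      simp only at heq
      rw [heq, sub_self, abs_zero] at h3
      omega
    have hcard : Sig.card = S.card := card_image_of_injOn hinj
    rcases S.eq_empty_or_nonempty with h | hSne
    · simp [h]
    have hSigne : Sig.Nonempty := hSne.image _
    have hsep' : ∀ a ∈ Sig, ∀ b ∈ Sig, a ≠ b → (p : ℤ) ≤ |a - b| := by
      intro a ha b hb hne
      obtain ⟨e1, he1, rfl⟩ := mem_image.mp ha
      obtain ⟨e2, he2, rfl⟩ := mem_image.mp hb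
      exact hSsep e1 he1 e2 he2 (fun h => hne (by rw [h]))
    have hspread := sep_spread p Sig.card Sig rfl hSigne hsep'
    have hmin : 3 ≤ Sig.min' hSigne := by
      obtain ⟨e, he, heq⟩ := mem_image.mp (Sig.min'_mem hSigne)
      have hb := hSbound e he
      omega
    have hmax : Sig.max' hSigne ≤ 2 * (k : ℤ) - 1 := by
      obtain ⟨e, he, heq⟩ := mem_image.mp (Sig.max'_mem hSigne)
      have hb := hSbound e he
      omega
    have hccard : 1 ≤ S.card := card_pos.mpr hSne
    have key : (p : ℤ) * ((S.card : ℤ) - 1) ≤ 2 * (k : ℤ) - 4 := by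
      rw [hcard] at hspread
      omega
    have hnat : (S.card - 1) * p ≤ 2 * k - 4 := by
      have hcast : ((p * (S.card - 1) : ℕ) : ℤ) = (p : ℤ) * ((S.card : ℤ) - 1) := by
        rw [Nat.cast_mul, Nat.cast_sub hccard]
        norm_num
      have hcast2 : ((2 * k - 4 : ℕ) : ℤ) = 2 * (k : ℤ) - 4 := by
        rw [Nat.cast_sub (by omega)]
        push_cast
        ring
      have : ((p * (S.card - 1) : ℕ) : ℤ) ≤ ((2 * k - 4 : ℕ) : ℤ) := by
        rw [hcast, hcast2]; exact key
      have h6 := Nat.cast_le.mp this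
      rwa [mul_comm] at h6
    have hdiv : S.card - 1 ≤ (2 * k - 4) / p :=
      (Nat.le_div_iff_mul_le (by omega : 0 < p)).mpr hnat
    have heq2 : (2 * k - 4) / p + 1 = (2 * k + p - 4) / p := by
      rw [← Nat.add_div_right _ (by omega : 0 < p)]
      congr 1
      omega
    calc S.card = (S.card - 1) + 1 := by omega
      _ ≤ (2 * k - 4) / p + 1 := Nat.add_le_add_right hdiv 1
      _ = (2 * k + p - 4) / p := heq2
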